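/- Every nonempty word w over Σ admits a factorization w = w₁w₂⋯w_m such that each w_i is a Lyndon word and w₁ ≥ w₂ ≥ ⋯ ≥ w_m lexicographically, and this factorization is unique. -/

import Mathlib

variable {α : Type*}

/-- The rotation `rot(w,i) = w[i..|w|-1] w[0..i-1]`. -/
def rot (w : List α) (i : ℕ) : List α := w.drop i ++ w.take i

/-- A Lyndon word: a nonempty word strictly smaller than all of its proper rotations. -/
def IsLyndon [LinearOrder α] (w : List α) : Prop :=
  w ≠ [] ∧ ∀ i, 0 < i → i < w.length → w < rot w i

/-- `IsCFL w f` : `f` is the Chen–Fox–Lyndon factorization of `w`, i.e. a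
nonincreasing sequence of Lyndon words whose concatenation is `w`. -/
def IsCFL [LinearOrder α] (w : List α) (f : List (List α)) : Prop :=
  f.flatten = w ∧ (∀ x ∈ f, IsLyndon x) ∧ f.Chain' (· ≥ ·)

/-- `u^k` : the `k`-fold concatenation of the word `u`. -/
def listPow (u : List α) (k : ℕ) : List α := (List.replicate k u).flatten

/-- `P`: the set of nonempty prefixes of Lyndon words. -/
def InP [LinearOrder α] (w : List α) : Prop :=
  w ≠ [] ∧ ∃ u : List α, IsLyndon (w ++ u)

/-- `P' = P ∪ { c^k : k ≥ 2 }` where `c` is the maximum symbol of the alphabet. -/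
def InP' [LinearOrder α] (w : List α) : Prop :=
  InP w ∨ ∃ (c : α) (k : ℕ), 2 ≤ k ∧ (∀ a : α, a ≤ c) ∧ w = List.replicate k c

/-- A border of `w`: a proper prefix of `w` that is also a suffix of `w`. -/
def IsBorder (b w : List α) : Prop := b <+: w ∧ b <:+ w ∧ b.length < w.length

/-- The length of the longest common prefix of two words. -/
def lcpLen [DecidableEq α] : List α → List α → ℕ
  | a :: u, b :: v => if a = b then lcpLen u v + 1 else 0
  | _, _ => 0

section Aux
variable [LinearOrder α]

private lemma lt_append_right' (u : List α) {t : List α} (ht : t ≠ []) : u < u ++ t := by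
  induction u with
  | nil =>
    cases t with
    | nil => exact absurd rfl ht
    | cons a l => exact (List.nil_lt_cons a l : ([] : List α) < a :: l)
  | cons a l ih => exact (List.Lex.cons (ih : List.Lex (· < ·) l (l ++ t)) :
      List.Lex (· < ·) (a :: l) (a :: (l ++ t)))

private lemma prefix_le {u v : List α} (h : u <+: v) : u ≤ v := by
  obtain ⟨t, rfl⟩ := h
  cases t with
  | nil => simp
  | cons a l => exact le_of_lt (lt_append_right' u (by simp))

private lemma prefix_lt {u v : List α} (h : u <+: v) (hne : u ≠ v) : u < v := by
  obtain ⟨t, rfl⟩ := h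
  cases t with
  | nil => simp at hne
  | cons a l => exact lt_append_right' u (by simp)

private lemma lt_of_append_lt : ∀ (u : List α) {x y : List α}, u ++ x < u ++ y → x < y
  | [], _, _, h => h
  | a :: u, x, y, h =>
    lt_of_append_lt u (List.lex_cons_iff.mp (h : List.Lex (· < ·) (a :: (u ++ x)) (a :: (u ++ y))))

private lemma append_lt_append {u : List α} {x y : List α} (h : x < y) : u ++ x < u ++ y :=
  (List.Lex.append_left _ (h : List.Lex (· < ·) x y) u : List.Lex (· < ·) (u ++ x) (u ++ y))

/-- first-difference dominance -/
private lemma dom : ∀ (a b : List α), a < b → ¬ a <+: b → ∀ (x y : List α), a ++ x < b ++ y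
  | [], _, _, hp, _, _ => absurd List.nil_prefix hp
  | a :: u, [], h, _, _, _ => nomatch (h : List.Lex (· < ·) (a :: u) [])
  | a :: u, b :: v, h, hp, x, y => by
    cases (h : List.Lex (· < ·) (a :: u) (b :: v)) with
    | rel hab => exact (List.Lex.rel hab : List.Lex (· < ·) (a :: (u ++ x)) (b :: (v ++ y)))
    | cons h' =>
      exact (List.Lex.cons (dom u v h'
        (fun hpre => hp (List.cons_prefix_cons.mpr ⟨rfl, hpre⟩)) x y) :
        List.Lex (· < ·) (a :: (u ++ x)) (a :: (v ++ y)))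

private lemma rot_spec (p s : List α) : rot (p ++ s) p.length = s ++ p := by
  simp [rot, List.drop_left, List.take_left]

/-- A Lyndon word has no nonempty proper border. -/
private lemma IsLyndon.not_border {w s : List α} (hw : IsLyndon w) (hpre : s <+: w)
    (hsuf : s <:+ w) (hs : s ≠ []) (hlen : s.length < w.length) : False := by
  obtain ⟨t, ht⟩ := hpre
  obtain ⟨p, hp⟩ := hsuf
  have hpne : p ≠ [] := by
    rintro rfl
    simp only [List.nil_append] at hp
    exact absurd (congrArg List.length hp) (by omega)
  have hplen : p.length < w.length := by
    have := congrArg List.length hp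
    simp only [List.length_append] at this
    have hsl : 0 < s.length := List.length_pos_iff.mpr hs
    omega
  have h1 : w < s ++ p := by
    have h := hw.2 p.length (List.length_pos_iff.mpr hpne) hplen
    rw [← hp, rot_spec] at h
    rw [← hp]; exact h
  have hslen : s.length < w.length := hlen
  have h2 : w < t ++ s := by
    have hsl : s.length < w.length := hlen
    have h := hw.2 s.length (List.length_pos_iff.mpr hs) hsl
    rw [← ht, rot_spec] at h
    rw [← ht]; exact h
  -- from w = s ++ t and h1 : s ++ t < s ++ p, get t < p
  have htp : t < p := lt_of_append_lt s (by rw [ht]; exact h1)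
  -- from w = p ++ s and h2 : p ++ s < t ++ s
  have h2' : p ++ s < t ++ s := by rw [hp]; exact h2
  have hlentp : t.length = p.length := by
    have e1 := congrArg List.length ht
    have e2 := congrArg List.length hp
    simp only [List.length_append] at e1 e2
    omega
  have hnpre : ¬ t <+: p := fun hh => (ne_of_lt htp) (hh.eq_of_length hlentp)
  have := dom t p htp hnpre s s
  exact lt_asymm h2' this

/-- A Lyndon word is smaller than each of its nonempty proper suffixes. -/
private lemma IsLyndon.lt_suffix {w p s : List α} (hw : IsLyndon w) (hps : w = p ++ s)
    (hp : p ≠ []) (hs : s ≠ []) : w < s := by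
  have hplen : p.length < w.length := by
    have := congrArg List.length hps
    simp only [List.length_append] at this
    have : 0 < s.length := List.length_pos_iff.mpr hs
    omega
  have h1 : w < s ++ p := by
    have h := hw.2 p.length (List.length_pos_iff.mpr hp) hplen
    rw [hps, rot_spec] at h
    rw [hps]; exact h
  by_contra hcon
  have hsw : s ≤ w := not_lt.mp hcon
  have hslen : s.length < w.length := by
    have := congrArg List.length hps
    simp only [List.length_append] at this
    have : 0 < p.length := List.length_pos_iff.mpr hp
    omega
  have hslt : s < w := lt_of_le_of_ne hsw (fun h => by
    rw [h] at hslen; omega)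
  by_cases hpre : s <+: w
  · exact hw.not_border hpre ⟨p, hps.symm⟩ hs hslen
  · have := dom s w hslt hpre p []
    rw [List.append_nil] at this
    exact lt_asymm h1 this

private lemma IsLyndon.singleton (a : α) : IsLyndon [a] :=
  ⟨by simp, fun i h1 h2 => by simp at h2; omega⟩

/-- Concatenation of Lyndon words `u < v` is Lyndon. -/
private lemma IsLyndon.append {u v : List α} (hu : IsLyndon u) (hv : IsLyndon v)
    (huv : u < v) : IsLyndon (u ++ v) := by
  have hun := hu.1; have hvn := hv.1
  have hulen : 0 < u.length := List.length_pos_iff.mpr hun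
  have hvlen : 0 < v.length := List.length_pos_iff.mpr hvn
  have hlt_v : u ++ v < v := by
    by_cases hp : u <+: v
    · obtain ⟨t, rfl⟩ := hp
      have ht : t ≠ [] := by
        rintro rfl; rw [List.append_nil] at huv; exact lt_irrefl _ huv
      exact append_lt_append (hv.lt_suffix rfl hun ht)
    · have := dom u v huv hp v []
      rwa [List.append_nil] at this
  refine ⟨by simp [hun], fun i hi0 hilen => ?_⟩
  rw [List.length_append] at hilen
  rcases lt_trichotomy i u.length with hi | hi | hi
  · -- i < |u|
    have hrot : rot (u ++ v) i = u.drop i ++ (v ++ u.take i) := by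
      simp [rot, List.drop_append_of_le_length (le_of_lt hi),
        List.take_append_of_le_length (le_of_lt hi)]
    rw [hrot]
    set s := u.drop i with hs
    set p := u.take i with hp
    have hups : u = p ++ s := (List.take_append_drop i u).symm
    have hsne : s ≠ [] := by
      have : 0 < s.length := by rw [hs, List.length_drop]; omega
      exact List.length_pos_iff.mp this
    have hslen : s.length < u.length := by rw [hs, List.length_drop]; omega
    have hru : u < s ++ p := by
      have := hu.2 i hi0 hi
      rwa [rot] at this
    have hnb : ¬ s <+: u := fun hh =>
      hu.not_border hh (hups ▸ ⟨p, rfl⟩) hsne hslen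
    rcases lt_trichotomy u s with h | h | h
    · have hnup : ¬ u <+: s := fun hh => absurd hh.length_le (by omega)
      exact dom u s h hnup v (v ++ p)
    · rw [h] at hslen; omega
    · have := dom s u h hnb p []
      rw [List.append_nil] at this
      exact absurd hru (lt_asymm this)
  · -- i = |u|
    subst hi
    rw [rot, List.drop_left, List.take_left]
    have hnp : ¬ (u ++ v) <+: v := fun hh => by
      have := hh.length_le
      rw [List.length_append] at this; omega
    have := dom (u ++ v) v hlt_v hnp [] u
    rwa [List.append_nil] at this
  · -- |u| < i
    obtain ⟨j, rfl⟩ : ∃ j, i = u.length + j := ⟨i - u.length, by omega⟩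
    have hj0 : 0 < j := by omega
    have hjlen : j < v.length := by omega
    have hrot : rot (u ++ v) (u.length + j) = v.drop j ++ (u ++ v.take j) := by
      rw [rot, List.drop_append, List.take_append]
      simp [List.drop_eq_nil_of_le, List.take_of_length_le]
    rw [hrot]
    set s := v.drop j with hs
    set p := v.take j with hp
    have hvps : v = p ++ s := (List.take_append_drop j v).symm
    have hsne : s ≠ [] := by
      have : 0 < s.length := by rw [hs, List.length_drop]; omega
      exact List.length_pos_iff.mp this
    have hslen : s.length < v.length := by rw [hs, List.length_drop]; omega
    have hrv : v < s ++ p := by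
      have := hv.2 j hj0 hjlen
      rwa [rot] at this
    have hnb : ¬ s <+: v := fun hh =>
      hv.not_border hh (hvps ▸ ⟨p, rfl⟩) hsne hslen
    rcases lt_trichotomy v s with h | h | h
    · have huvs : u ++ v < s := lt_trans hlt_v h
      have hnp : ¬ (u ++ v) <+: s := fun hh => by
        have := hh.length_le
        rw [List.length_append] at this; omega
      have := dom (u ++ v) s huvs hnp [] (u ++ p)
      rwa [List.append_nil] at this
    · rw [h] at hslen; omega
    · have := dom s v h hnb p []
      rw [List.append_nil] at this
      exact absurd hrv (lt_asymm this)

/-- merging step for existence -/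
private lemma merge_step : ∀ (f : List (List α)), (∀ x ∈ f, IsLyndon x) →
    ¬ f.Chain' (· ≥ ·) →
    ∃ g : List (List α), g.flatten = f.flatten ∧ (∀ x ∈ g, IsLyndon x) ∧
      g.length < f.length
  | [], _, hnc => absurd List.isChain_nil hnc
  | [a], _, hnc => absurd (List.isChain_singleton a) hnc
  | a :: b :: r, hly, hnc => by
    by_cases hab : b ≤ a
    · have hnc' : ¬ (b :: r).Chain' (· ≥ ·) := fun hc =>
        hnc (List.isChain_cons_cons.mpr ⟨hab, hc⟩)
      obtain ⟨g, hg1, hg2, hg3⟩ := merge_step (b :: r)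
        (fun x hx => hly x (List.mem_cons_of_mem a hx)) hnc'
      exact ⟨a :: g, by simp [hg1], fun x hx => by
        rcases List.mem_cons.mp hx with rfl | hx
        · exact hly x (List.mem_cons_self)
        · exact hg2 x hx, by
          simp only [List.length_cons] at hg3 ⊢; omega⟩
    · have hab' : a < b := not_le.mp hab
      refine ⟨(a ++ b) :: r, by simp, fun x hx => ?_, by simp⟩
      rcases List.mem_cons.mp hx with rfl | hx
      · exact (hly a (by simp)).append (hly b (by simp)) hab'
      · exact hly x (by simp [hx])

private lemma exists_chain : ∀ (n : ℕ) (f : List (List α)), f.length ≤ n →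
    (∀ x ∈ f, IsLyndon x) →
    ∃ g : List (List α), g.flatten = f.flatten ∧ (∀ x ∈ g, IsLyndon x) ∧
      g.Chain' (· ≥ ·)
  | 0, f, hlen, _ => by
    have : f = [] := List.length_eq_zero_iff.mp (by omega)
    exact ⟨[], by rw [this], by simp, List.isChain_nil⟩
  | n + 1, f, hlen, hly => by
    by_cases hc : f.Chain' (· ≥ ·)
    · exact ⟨f, rfl, hly, hc⟩
    · obtain ⟨g, hg1, hg2, hg3⟩ := merge_step f hly hc
      obtain ⟨g', h1, h2, h3⟩ := exists_chain n g (by omega) hg2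
      exact ⟨g', by rw [h1, hg1], h2, h3⟩

private lemma flatten_map_singleton : ∀ (w : List α), (w.map fun a => [a]).flatten = w
  | [] => rfl
  | a :: w => by simp [flatten_map_singleton w]

private lemma cfl_exists (w : List α) : ∃ f, IsCFL w f := by
  obtain ⟨g, h1, h2, h3⟩ := exists_chain (w.map fun a => [a]).length _ le_rfl
    (fun x hx => by
      obtain ⟨a, _, rfl⟩ := List.mem_map.mp hx
      exact IsLyndon.singleton a)
  exact ⟨g, by rw [h1, flatten_map_singleton], h2, h3⟩

/-- the crossing lemma for uniqueness -/
private lemma no_cross {a b : List α} (ha : IsLyndon a) :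
    ∀ (h : List (List α)), (∀ x ∈ h, x ≤ b ∧ x ≠ []) → b < a →
    ∀ s r : List α, s ≠ [] → r ≠ [] → a = s ++ r → r <+: h.flatten → False
  | [], _, _, s, r, _, hr, _, hpre => by
    simp only [List.flatten_nil, List.prefix_nil] at hpre
    exact hr hpre
  | x :: h', hx, hba, s, r, hs, hr, hsr, hpre => by
    have hxb := (hx x (by simp)).1
    have hxne := (hx x (by simp)).2
    have har : a < r := ha.lt_suffix hsr hs hr
    simp only [List.flatten_cons] at hpre
    by_cases hlen : r.length ≤ x.length
    · have hrx : r <+: x := List.prefix_of_prefix_length_le hpre ⟨h'.flatten, rfl⟩ hlen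
      exact lt_irrefl a (lt_of_lt_of_le har (le_trans (prefix_le hrx) (le_trans hxb (le_of_lt hba))))
    · have hxr : x <+: r := List.prefix_of_prefix_length_le ⟨h'.flatten, rfl⟩ hpre (by omega)
      obtain ⟨r', rfl⟩ := hxr
      have hpre' : r' <+: h'.flatten := (List.prefix_append_right_inj x).mp hpre
      by_cases hr' : r' = []
      · subst hr'
        rw [List.append_nil] at har
        exact lt_irrefl a (lt_of_lt_of_le har (le_trans hxb (le_of_lt hba)))
      · exact no_cross ha h' (fun y hy => hx y (by simp [hy])) hba (s ++ x) r'
          (by simp [hs]) hr' (by rw [hsr, List.append_assoc]) hpre'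

private lemma not_first_longer {w : List α} {a b : List α} {f' g' : List (List α)}
    (hf : IsCFL w (a :: f')) (hg : IsCFL w (b :: g')) (hlen : b.length < a.length) : False := by
  have ha : IsLyndon a := hf.2.1 a (by simp)
  have hb : IsLyndon b := hg.2.1 b (by simp)
  have hfw : a ++ f'.flatten = w := by
    have := hf.1; simpa [List.flatten_cons] using this
  have hgw : b ++ g'.flatten = w := by
    have := hg.1; simpa [List.flatten_cons] using this
  have hba : b <+: a := List.prefix_of_prefix_length_le ⟨g'.flatten, hgw⟩ ⟨f'.flatten, hfw⟩
    (le_of_lt hlen)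
  obtain ⟨r, hbr⟩ := hba
  have hrne : r ≠ [] := by
    rintro rfl
    rw [List.append_nil] at hbr
    rw [hbr] at hlen
    omega
  have hblt : b < a := prefix_lt ⟨r, hbr⟩ (by
    rintro rfl
    omega)
  have hflat : r ++ f'.flatten = g'.flatten := by
    apply List.append_cancel_left (as := b)
    rw [← List.append_assoc, hbr, hfw]
    exact hgw.symm
  have hpw := List.isChain_iff_pairwise.mp hg.2.2
  have hxb : ∀ x ∈ g', x ≤ b ∧ x ≠ [] := fun x hxm =>
    ⟨(List.pairwise_cons.mp hpw).1 x hxm, (hg.2.1 x (by simp [hxm])).1⟩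
  exact no_cross ha g' hxb hblt b r hb.1 hrne hbr.symm ⟨f'.flatten, hflat⟩

private lemma cfl_unique : ∀ (f : List (List α)) {w : List α} (g : List (List α)),
    IsCFL w f → IsCFL w g → f = g
  | [], _, [], _, _ => rfl
  | [], _, b :: g', hf, hg => by
    exfalso
    have h1 : (b :: g').flatten = List.flatten ([] : List (List α)) := by rw [hf.1, hg.1]
    simp only [List.flatten_cons, List.flatten_nil, List.append_eq_nil_iff] at h1
    exact (hg.2.1 b (by simp)).1 h1.1
  | a :: f', _, [], hf, hg => by
    exfalso
    have h1 : (a :: f').flatten = List.flatten ([] : List (List α)) := by rw [hf.1, hg.1]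
    simp only [List.flatten_cons, List.flatten_nil, List.append_eq_nil_iff] at h1
    exact (hf.2.1 a (by simp)).1 h1.1
  | a :: f', w, b :: g', hf, hg => by
    have hfw : a ++ f'.flatten = w := by
      have := hf.1; simpa [List.flatten_cons] using this
    have hgw : b ++ g'.flatten = w := by
      have := hg.1; simpa [List.flatten_cons] using this
    have hab : a = b := by
      rcases lt_trichotomy a.length b.length with h | h | h
      · exact absurd (not_first_longer hg hf h) not_false
      · exact (List.prefix_of_prefix_length_le ⟨f'.flatten, hfw⟩ ⟨g'.flatten, hgw⟩
          (le_of_eq h)).eq_of_length h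
      · exact absurd (not_first_longer hf hg h) not_false
    subst hab
    have hff : f'.flatten = g'.flatten := by
      apply List.append_cancel_left (as := a)
      rw [hfw]
      exact hgw.symm
    have hrec : f' = g' := cfl_unique f' (w := f'.flatten) g'
      ⟨rfl, fun x hxm => hf.2.1 x (by simp [hxm]), hf.2.2.tail⟩
      ⟨hff.symm, fun x hxm => hg.2.1 x (by simp [hxm]), hg.2.2.tail⟩
    rw [hrec]

end Aux

/-- Every nonempty word admits a unique factorization into a nonincreasing
sequence of Lyndon words (Chen–Fox–Lyndon theorem). -/
theorem cfl_exists_unique [LinearOrder α] (w : List α) (hw : w ≠ []) :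
    ∃! f : List (List α), IsCFL w f := by
  obtain ⟨f, hf⟩ := cfl_exists w
  exact ⟨f, hf, fun g hg => cfl_unique g f hg hf⟩
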